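/- Consider N interconnected scalar systems ẋ_i = f_i(x_i) + u_i, i = 1,…,N, with f_i : ℝ → ℝ continuous, where each system defines a semi-passive map u_i ↦ x_i. Let the coupling inputs be u_i = −Σ_{j≠i} a_{ij}(x_i − x_j) with constant gains a_{ij} ≥ 0, and suppose the directed graph on the N nodes with an edge from node j to node i whenever a_{ij} > 0 contains a directed spanning tree. Then every solution t ↦ x(t) = (x_1(t),…,x_N(t)) of the closed-loop system defined on [0,∞) is bounded. -/

import Mathlib

open Finset

/-- The scalar system `ẋ = f(x) + u` defines a semi-passive map `u ↦ x`:
there exist a `C¹`, radially unbounded, nonnegative storage function `V`,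
a continuous function `H`, a positive continuous function `ψ` (on `[0,∞)`),
and a constant `ρ > 0` such that `V'(x)(f(x)+u) ≤ u·x − H(x)` for all `x, u`,
and `H(x) ≥ ψ(|x|)` whenever `|x| ≥ ρ`. -/
def SemiPassive (f : ℝ → ℝ) : Prop :=
  ∃ (V H ψ : ℝ → ℝ) (ρ : ℝ),
    ContDiff ℝ 1 V ∧
    (∀ x, 0 ≤ V x) ∧
    Filter.Tendsto V (Filter.comap (fun x : ℝ => |x|) Filter.atTop) Filter.atTop ∧
    Continuous H ∧
    ContinuousOn ψ (Set.Ici 0) ∧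
    (∀ r : ℝ, 0 ≤ r → 0 < ψ r) ∧
    0 < ρ ∧
    (∀ x u : ℝ, deriv V x * (f x + u) ≤ u * x - H x) ∧
    (∀ x : ℝ, ρ ≤ |x| → ψ |x| ≤ H x)

/-- In the weighted directed graph with weights `a` (an edge from node `j` to
node `i` whenever `a i j > 0`), node `j` is reachable from node `i`. -/
def Reachable {N : ℕ} (a : Fin N → Fin N → ℝ) : Fin N → Fin N → Prop :=
  Relation.ReflTransGen (fun u v => 0 < a v u)

/-- If `g` has a (right-)derivative `d < 0` at `T`, then `g s < g T`
for `s > T` near `T`. -/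
lemma ev_lt_of_hasDerivWithinAt_neg {g : ℝ → ℝ} {T d : ℝ}
    (hg : HasDerivWithinAt g d (Set.Ici T) T) (hd : d < 0) :
    ∀ᶠ s in nhdsWithin T (Set.Ioi T), g s < g T := by
  have h := hasDerivWithinAt_iff_tendsto_slope.mp hg
  rw [Set.Ici_sdiff_left] at h
  have h2 : ∀ᶠ s in nhdsWithin T (Set.Ioi T), slope g T s < 0 := h.eventually_lt_const hd
  filter_upwards [h2, self_mem_nhdsWithin] with s hs hsT
  have hsT' : 0 < s - T := sub_pos.mpr hsT
  rw [slope_def_field] at hs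
  have h4 := mul_neg_of_neg_of_pos hs hsT'
  rw [div_mul_cancel₀ _ (ne_of_gt hsT')] at h4
  linarith

/-- Semi-passivity forces `x·f(x) < 0` for `|x| ≥ ρ`. -/
lemma semipassive_sign {f : ℝ → ℝ} (hsp : SemiPassive f) :
    ∃ ρ : ℝ, 0 < ρ ∧ ∀ y : ℝ, ρ ≤ |y| → y * f y < 0 := by
  obtain ⟨V, H, ψ, ρ, -, -, -, -, -, hψpos, hρ, hIneq, hHψ⟩ := hsp
  refine ⟨ρ, hρ, fun y hy => ?_⟩
  have hd : deriv V y = y := by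
    by_contra hne
    set d := deriv V y with hdd
    have hC : ∀ u : ℝ, u * (d - y) ≤ -(H y) - d * f y := by
      intro u
      have h := hIneq y u
      nlinarith [h]
    have hne' : d - y ≠ 0 := sub_ne_zero.mpr hne
    have h2 := hC ((-(H y) - d * f y + 1) / (d - y))
    rw [div_mul_cancel₀ _ hne'] at h2
    linarith
  have h0 := hIneq y 0
  rw [hd] at h0
  have hψ := hψpos |y| (abs_nonneg y)
  have hH := hHψ y hy
  nlinarith [h0]

/-- Boundedness of solutions for a network of heterogeneous semi-passive
scalar systems `ẋᵢ = fᵢ(xᵢ) + uᵢ` with diffusive coupling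
`uᵢ = −∑_{j≠i} aᵢⱼ (xᵢ − xⱼ)`, whose interconnection graph contains a
directed spanning tree. -/
theorem network_bounded_of_semipassive_of_spanning_tree
    (N : ℕ) (hN : 0 < N)
    (f : Fin N → ℝ → ℝ)
    (hf : ∀ i, Continuous (f i))
    (hsp : ∀ i, SemiPassive (f i))
    (a : Fin N → Fin N → ℝ)
    (ha : ∀ i j, 0 ≤ a i j)
    (htree : ∃ r : Fin N, ∀ j : Fin N, Reachable a r j)
    (x : ℝ → Fin N → ℝ)
    (hx : ∀ i : Fin N, ∀ t ∈ Set.Ici (0 : ℝ),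
      HasDerivWithinAt (fun s => x s i)
        (f i (x t i) - ∑ j ∈ Finset.univ.erase i, a i j * (x t i - x t j))
        (Set.Ici 0) t) :
    ∃ c : ℝ, ∀ t ∈ Set.Ici (0 : ℝ), ∀ i : Fin N, |x t i| ≤ c := by
  choose ρ hρpos hρkey using fun i => semipassive_sign (hsp i)
  set c : ℝ := (∑ i, ρ i) + ∑ i, |x 0 i| with hc
  have hρnn : (0:ℝ) ≤ ∑ j, ρ j := Finset.sum_nonneg fun j _ => (hρpos j).le
  have habsnn : (0:ℝ) ≤ ∑ j, |x 0 j| := Finset.sum_nonneg fun j _ => abs_nonneg _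
  have hρc : ∀ i, ρ i ≤ c := fun i =>
    le_trans (Finset.single_le_sum (fun j _ => (hρpos j).le) (Finset.mem_univ i))
      (le_add_of_nonneg_right habsnn)
  have hx0c : ∀ i, |x 0 i| ≤ c := by
    intro i
    have h1 : |x 0 i| ≤ ∑ j, |x 0 j| :=
      Finset.single_le_sum (f := fun j => |x 0 j|) (fun j _ => abs_nonneg (x 0 j))
        (Finset.mem_univ i)
    linarith
  have hcpos : 0 < c := lt_of_lt_of_le (hρpos ⟨0, hN⟩) (hρc _)
  -- the sign of f on the box boundary
  have hfc : ∀ i, f i c < 0 := by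
    intro i
    have h := hρkey i c (by rw [abs_of_pos hcpos]; exact hρc i)
    nlinarith
  have hfmc : ∀ i, 0 < f i (-c) := by
    intro i
    have h := hρkey i (-c) (by rw [abs_neg, abs_of_pos hcpos]; exact hρc i)
    nlinarith
  have hcont : ∀ i, ContinuousOn (fun s => x s i) (Set.Ici 0) :=
    fun i t ht => (hx i t ht).continuousWithinAt
  refine ⟨c, ?_⟩
  intro t₁ ht₁
  have ht₁' : (0:ℝ) ≤ t₁ := ht₁
  set S : Set ℝ := {t | t ∈ Set.Icc 0 t₁ ∧ ∀ s ∈ Set.Icc 0 t, ∀ i, |x s i| ≤ c} with hSdef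
  have h0S : (0:ℝ) ∈ S := by
    refine ⟨⟨le_refl _, ht₁'⟩, fun s hs i => ?_⟩
    have : s = 0 := le_antisymm hs.2 hs.1
    rw [this]; exact hx0c i
  have hbdd : BddAbove S := ⟨t₁, fun t ht => ht.1.2⟩
  set T := sSup S with hT
  have hT0 : 0 ≤ T := le_csSup hbdd h0S
  have hTle : T ≤ t₁ := csSup_le ⟨0, h0S⟩ fun t ht => ht.1.2
  have hbelow : ∀ s ∈ Set.Ico 0 T, ∀ i, |x s i| ≤ c := by
    intro s hs i
    obtain ⟨t, htS, hst⟩ := exists_lt_of_lt_csSup ⟨0, h0S⟩ hs.2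
    exact htS.2 s ⟨hs.1, hst.le⟩ i
  have hTS : ∀ i, |x T i| ≤ c := by
    intro i
    rcases eq_or_lt_of_le hT0 with h0 | h0
    · rw [← h0]; exact hx0c i
    · have hne : (nhdsWithin T (Set.Ico 0 T)).NeBot := by
        refine mem_closure_iff_nhdsWithin_neBot.mp ?_
        rw [closure_Ico (ne_of_lt h0)]
        exact ⟨hT0, le_refl T⟩
      have h1 : Filter.Tendsto (fun s => x s i) (nhdsWithin T (Set.Ico 0 T)) (nhds (x T i)) :=
        ((hcont i T (Set.mem_Ici.mpr hT0)).mono fun y hy => hy.1)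
      have htend : Filter.Tendsto (fun s => |x s i|) (nhdsWithin T (Set.Ico 0 T)) (nhds |x T i|) :=
        (continuous_abs.tendsto _).comp h1
      exact le_of_tendsto htend
        (Filter.eventually_of_mem self_mem_nhdsWithin fun s hs => hbelow s hs i)
  have hTfull : ∀ s ∈ Set.Icc 0 T, ∀ i, |x s i| ≤ c := by
    intro s hs i
    rcases lt_or_eq_of_le hs.2 with h | h
    · exact hbelow s ⟨hs.1, h⟩ i
    · rw [h]; exact hTS i
  rcases eq_or_lt_of_le hTle with hTeq | hTlt
  · intro i; rw [← hTeq]; exact hTS i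
  · exfalso
    have hIoi_sub : Set.Ioi T ⊆ Set.Ici (0:ℝ) := fun y hy => le_trans hT0 (le_of_lt hy)
    have hnle : nhdsWithin T (Set.Ioi T) ≤ nhdsWithin T (Set.Ici (0:ℝ)) :=
      nhdsWithin_mono T hIoi_sub
    have hev : ∀ i, ∀ᶠ s in nhdsWithin T (Set.Ioi T), |x s i| ≤ c := by
      intro i
      have hcw : Filter.Tendsto (fun s => x s i) (nhdsWithin T (Set.Ioi T)) (nhds (x T i)) :=
        (hcont i T (Set.mem_Ici.mpr hT0)).mono_left hnle
      have hD := (hx i T (Set.mem_Ici.mpr hT0)).mono (Set.Ici_subset_Ici.mpr hT0)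
      rcases eq_or_lt_of_le (hTS i) with heq | hlt
      · -- |x T i| = c : boundary case
        have hxjle : ∀ j, x T j ≤ c := fun j => (abs_le.mp (hTS j)).2
        have hxjge : ∀ j, -c ≤ x T j := fun j => (abs_le.mp (hTS j)).1
        rcases (abs_eq (le_of_lt hcpos)).mp heq with hpc | hmc
        · -- x T i = c, derivative negative
          have hsum : 0 ≤ ∑ j ∈ Finset.univ.erase i, a i j * (x T i - x T j) := by
            refine Finset.sum_nonneg fun j _ => mul_nonneg (ha i j) ?_
            rw [hpc]; linarith [hxjle j]
          have hdneg : f i (x T i) - ∑ j ∈ Finset.univ.erase i, a i j * (x T i - x T j) < 0 := by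
            rw [hpc] at hsum ⊢; linarith [hfc i]
          have h1 := ev_lt_of_hasDerivWithinAt_neg hD hdneg
          have h2 : ∀ᶠ s in nhdsWithin T (Set.Ioi T), -c < x s i :=
            hcw.eventually_const_lt (by rw [hpc]; linarith)
          filter_upwards [h1, h2] with s hs1 hs2
          rw [hpc] at hs1
          exact abs_le.mpr ⟨hs2.le, hs1.le⟩
        · -- x T i = -c, derivative positive
          have hsum : ∑ j ∈ Finset.univ.erase i, a i j * (x T i - x T j) ≤ 0 := by
            refine Finset.sum_nonpos fun j _ => mul_nonpos_of_nonneg_of_nonpos (ha i j) ?_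
            rw [hmc]; linarith [hxjge j]
          have hdpos : 0 < f i (x T i) - ∑ j ∈ Finset.univ.erase i, a i j * (x T i - x T j) := by
            rw [hmc] at hsum ⊢; linarith [hfmc i]
          have h1 := ev_lt_of_hasDerivWithinAt_neg hD.neg (by linarith)
          have h2 : ∀ᶠ s in nhdsWithin T (Set.Ioi T), x s i < c :=
            hcw.eventually_lt_const (by rw [hmc]; linarith)
          filter_upwards [h1, h2] with s hs1 hs2
          simp only [Pi.neg_apply, neg_lt_neg_iff] at hs1
          rw [hmc] at hs1
          exact abs_le.mpr ⟨hs1.le, hs2.le⟩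
      · -- |x T i| < c : continuity
        have htend : Filter.Tendsto (fun s => |x s i|) (nhdsWithin T (Set.Ioi T)) (nhds |x T i|) :=
          (continuous_abs.tendsto _).comp hcw
        exact (htend.eventually_lt_const hlt).mono fun s hs => hs.le
    have hlt1 : ∀ᶠ s in nhdsWithin T (Set.Ioi T), s < t₁ :=
      Filter.eventually_of_mem (nhdsWithin_le_nhds (Iio_mem_nhds hTlt)) fun s hs => hs
    have hall : {s : ℝ | (∀ i, |x s i| ≤ c) ∧ s < t₁} ∈ nhdsWithin T (Set.Ioi T) := by
      have := (Filter.eventually_all.mpr hev).and hlt1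
      exact this
    obtain ⟨u, hu, hsub⟩ := mem_nhdsGT_iff_exists_Ioo_subset.mp hall
    have huT : T < u := hu
    set b := min u t₁ with hb
    have hTb : T < b := lt_min huT hTlt
    set s₀ := (T + b) / 2 with hs₀
    have hTs₀ : T < s₀ := by simp only [hs₀]; linarith
    have hs₀b : s₀ < b := by simp only [hs₀]; linarith
    have hs₀S : s₀ ∈ S := by
      refine ⟨⟨by linarith, le_of_lt (lt_of_lt_of_le hs₀b (min_le_right _ _))⟩, fun σ hσ i => ?_⟩
      rcases le_or_gt σ T with h | h
      · exact hTfull σ ⟨hσ.1, h⟩ i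
      · have hσu : σ < u := lt_of_le_of_lt hσ.2 (lt_of_lt_of_le hs₀b (min_le_left _ _))
        exact (hsub ⟨h, hσu⟩).1 i
    have := le_csSup hbdd hs₀S
    linarith
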